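/- For every integer n ≥ 0, the integer (n+1)·T_{2n+1} is divisible by 2^{2n}, where T_{2n+1} is the (2n+1)-st tangent number. -/

import Mathlib

open Polynomial Finset

namespace TangentAux

/-- The operator `p ↦ (1 + X^2) * p'`, corresponding to `d/dθ` acting through `t = tan θ`. -/
noncomputable def Dop (p : ℤ[X]) : ℤ[X] := (1 + X ^ 2) * derivative p

/-- The tangent polynomials: `iteratedDeriv n tan = (tp n).eval ∘ tan`. -/
noncomputable def tp : ℕ → ℤ[X]
  | 0 => X
  | n + 1 => Dop (tp n)

lemma Dop_add (p q : ℤ[X]) : Dop (p + q) = Dop p + Dop q := by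
  simp [Dop, mul_add]

lemma Dop_nsmul (n : ℕ) (p : ℤ[X]) : Dop (n • p) = n • Dop p := by
  simp only [Dop, nsmul_eq_mul, derivative_mul, derivative_natCast, zero_mul, zero_add]
  ring

lemma Dop_sum {α : Type*} (s : Finset α) (f : α → ℤ[X]) :
    Dop (∑ a ∈ s, f a) = ∑ a ∈ s, Dop (f a) := by
  simp [Dop, derivative_sum, mul_sum]

lemma Dop_mul (p q : ℤ[X]) : Dop (p * q) = Dop p * q + p * Dop q := by
  simp only [Dop, derivative_mul]; ring

lemma iterate_Dop_mul (n : ℕ) (p q : ℤ[X]) :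
    Dop^[n] (p * q) =
      ∑ k ∈ range n.succ, (n.choose k • (Dop^[n - k] p * Dop^[k] q)) := by
  induction n with
  | zero => simp [Finset.range]
  | succ n IH =>
    calc
      Dop^[n + 1] (p * q) =
          Dop (∑ k ∈ range n.succ,
              n.choose k • (Dop^[n - k] p * Dop^[k] q)) := by
        rw [Function.iterate_succ_apply', IH]
      _ = (∑ k ∈ range n.succ,
            n.choose k • (Dop^[n - k + 1] p * Dop^[k] q)) +
          ∑ k ∈ range n.succ,
            n.choose k • (Dop^[n - k] p * Dop^[k + 1] q) := by
        simp_rw [Dop_sum, Dop_nsmul, Dop_mul, Function.iterate_succ_apply',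
          smul_add, sum_add_distrib]
      _ = (∑ k ∈ range n.succ,
                n.choose k.succ • (Dop^[n - k] p * Dop^[k + 1] q)) +
              1 • (Dop^[n + 1] p * Dop^[0] q) +
            ∑ k ∈ range n.succ, n.choose k • (Dop^[n - k] p * Dop^[k + 1] q) :=
        ?_
      _ = ((∑ k ∈ range n.succ, n.choose k • (Dop^[n - k] p * Dop^[k + 1] q)) +
              ∑ k ∈ range n.succ,
                n.choose k.succ • (Dop^[n - k] p * Dop^[k + 1] q)) +
            1 • (Dop^[n + 1] p * Dop^[0] q) := by
        rw [add_comm, add_assoc]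
      _ = (∑ i ∈ range n.succ,
              (n + 1).choose (i + 1) • (Dop^[n + 1 - (i + 1)] p * Dop^[i + 1] q)) +
            1 • (Dop^[n + 1] p * Dop^[0] q) := by
        simp_rw [Nat.choose_succ_succ, Nat.succ_sub_succ, add_smul, sum_add_distrib]
      _ = ∑ k ∈ range n.succ.succ,
            n.succ.choose k • (Dop^[n.succ - k] p * Dop^[k] q) := by
        rw [sum_range_succ' _ n.succ, Nat.choose_zero_right, tsub_zero]
    congr
    refine (sum_range_succ' _ _).trans (congr_arg₂ (· + ·) ?_ ?_)
    · rw [sum_range_succ, Nat.choose_succ_self, zero_smul, add_zero]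
      refine sum_congr rfl fun k hk => ?_
      rw [mem_range] at hk
      congr
      omega
    · rw [Nat.choose_zero_right, tsub_zero]

lemma iterate_Dop_add (n : ℕ) (p q : ℤ[X]) :
    Dop^[n] (p + q) = Dop^[n] p + Dop^[n] q := by
  induction n with
  | zero => rfl
  | succ n IH =>
    rw [Function.iterate_succ_apply', Function.iterate_succ_apply',
      Function.iterate_succ_apply', IH, Dop_add]

lemma iterate_Dop_zero (n : ℕ) : Dop^[n] (0 : ℤ[X]) = 0 := by
  induction n with
  | zero => rfl
  | succ n IH => rw [Function.iterate_succ_apply, show Dop 0 = 0 by simp [Dop], IH]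

lemma tp_eq_iterate (n : ℕ) : tp n = Dop^[n] X := by
  induction n with
  | zero => rfl
  | succ n IH =>
    show Dop (tp n) = _
    rw [IH]
    exact (Function.iterate_succ_apply' Dop n X).symm

/-- The tangent numbers as integers. -/
noncomputable def T (n : ℕ) : ℤ := (tp n).eval 0

lemma T_one : T 1 = 1 := by
  simp [T, tp, Dop]

lemma Dop_comp_neg (p : ℤ[X]) : (Dop p).comp (-X) = -Dop (p.comp (-X)) := by
  rw [Dop, Dop, derivative_comp]
  simp only [mul_comp, add_comp, one_comp, pow_comp, X_comp, derivative_neg, derivative_X]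
  ring

lemma tp_comp_neg (n : ℕ) : (tp n).comp (-X) = (-1) ^ (n + 1) * tp n := by
  induction n with
  | zero => simp [tp]
  | succ n IH =>
    show (Dop (tp n)).comp (-X) = (-1) ^ (n + 1 + 1) * Dop (tp n)
    rw [Dop_comp_neg, IH]
    show -Dop ((-1) ^ (n + 1) * tp n) = _
    rw [Dop, Dop, derivative_mul]
    have h0 : derivative ((-1 : ℤ[X]) ^ (n + 1)) = 0 := by
      simp [derivative_pow]
    rw [h0, pow_succ]
    ring

lemma T_even (m : ℕ) : T (2 * m) = 0 := by
  have h := congrArg (Polynomial.eval (0 : ℤ)) (tp_comp_neg (2 * m))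
  rw [eval_comp] at h
  simp only [eval_mul, eval_pow, eval_neg, eval_one, eval_X, neg_zero] at h
  have hpow : (-1 : ℤ) ^ (2 * m + 1) = -1 := by
    rw [pow_succ, pow_mul]; norm_num
  rw [hpow] at h
  unfold T
  linarith [h]

/-- The convolution recurrence for tangent numbers. -/
lemma T_rec (n : ℕ) :
    T (n + 1) = (if n = 0 then 1 else 0) +
      ∑ k ∈ range (n + 1), (n.choose k : ℤ) * (T (n - k) * T k) := by
  have h1 : tp (n + 1) = Dop^[n] (1 : ℤ[X]) + Dop^[n] (X * X) := by
    have h0 : tp (n + 1) = Dop^[n] (tp 1) := by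
      rw [tp_eq_iterate, Function.iterate_succ_apply]; rfl
    have h2 : tp 1 = 1 + X * X := by
      show Dop X = _
      rw [Dop]; simp [sq]
    calc tp (n + 1) = Dop^[n] (1 + X * X) := by rw [h0, h2]
    _ = Dop^[n] 1 + Dop^[n] (X * X) := iterate_Dop_add n 1 (X * X)
  have hone : Dop^[n] (1 : ℤ[X]) = if n = 0 then 1 else 0 := by
    cases n with
    | zero => rfl
    | succ n =>
      simp only [Nat.succ_ne_zero, if_false]
      rw [Function.iterate_succ_apply]
      have h : Dop (1 : ℤ[X]) = 0 := by simp [Dop]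
      rw [h, iterate_Dop_zero]
  unfold T
  rw [h1, hone, iterate_Dop_mul]
  rw [eval_add, eval_finset_sum]
  congr 1
  · split <;> simp
  · refine sum_congr rfl fun k hk => ?_
    simp only [nsmul_eq_mul, eval_mul, eval_natCast]
    rw [← tp_eq_iterate, ← tp_eq_iterate]

lemma sum_odd_vanish (n : ℕ) (f : ℕ → ℤ) (h : ∀ i, f (2 * i) = 0) :
    ∑ k ∈ range (2 * n + 1), f k = ∑ i ∈ range n, f (2 * i + 1) := by
  induction n with
  | zero => simpa using h 0
  | succ n IH =>
    have e1 : 2 * (n + 1) + 1 = (2 * n + 1) + 1 + 1 := by ring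
    rw [e1, sum_range_succ, sum_range_succ, IH, sum_range_succ]
    have h2 : f (2 * n + 1 + 1) = 0 := by
      rw [show 2 * n + 1 + 1 = 2 * (n + 1) by ring]; exact h (n + 1)
    rw [h2, add_zero]

lemma choose_identity (i j n : ℕ) (h : n = i + j + 1) :
    (2 * n + 1) * ((n + 1) * Nat.choose (2 * n) (2 * i + 1))
      = 2 * ((i + 1) * ((j + 1) * Nat.choose (2 * n + 2) (2 * i + 2))) := by
  have h1 := Nat.add_one_mul_choose_eq (2 * n + 1) (2 * i + 1)
  have h2 := Nat.add_one_mul_choose_eq (2 * n) (2 * j + 1)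
  rw [show 2 * i + 1 + 1 = 2 * i + 2 by ring] at h1
  rw [show 2 * n + 1 + 1 = 2 * n + 2 by ring] at h1
  rw [show 2 * j + 1 + 1 = 2 * j + 2 by ring] at h2
  have h3 : Nat.choose (2 * n + 1) (2 * i + 1) = Nat.choose (2 * n + 1) (2 * j + 2) := by
    rw [show 2 * j + 2 = (2 * n + 1) - (2 * i + 1) by omega]
    exact (Nat.choose_symm (by omega)).symm
  have h4 : Nat.choose (2 * n) (2 * j + 1) = Nat.choose (2 * n) (2 * i + 1) := by
    rw [show 2 * i + 1 = 2 * n - (2 * j + 1) by omega]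
    exact (Nat.choose_symm (by omega)).symm
  have key : (2 * n + 2) * ((2 * n + 1) * Nat.choose (2 * n) (2 * i + 1))
      = (2 * j + 2) * (Nat.choose (2 * n + 2) (2 * i + 2) * (2 * i + 2)) := by
    calc (2 * n + 2) * ((2 * n + 1) * Nat.choose (2 * n) (2 * i + 1))
        = (2 * n + 2) * ((2 * n + 1) * Nat.choose (2 * n) (2 * j + 1)) := by rw [h4]
      _ = (2 * n + 2) * (Nat.choose (2 * n + 1) (2 * j + 2) * (2 * j + 2)) := by rw [h2]
      _ = (2 * j + 2) * ((2 * n + 2) * Nat.choose (2 * n + 1) (2 * i + 1)) := by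
          rw [h3]; ring
      _ = (2 * j + 2) * (Nat.choose (2 * n + 2) (2 * i + 2) * (2 * i + 2)) := by rw [h1]
  have final : 2 * ((2 * n + 1) * ((n + 1) * Nat.choose (2 * n) (2 * i + 1)))
      = 2 * (2 * ((i + 1) * ((j + 1) * Nat.choose (2 * n + 2) (2 * i + 2)))) := by
    calc 2 * ((2 * n + 1) * ((n + 1) * Nat.choose (2 * n) (2 * i + 1)))
        = (2 * n + 2) * ((2 * n + 1) * Nat.choose (2 * n) (2 * i + 1)) := by ring
      _ = (2 * j + 2) * (Nat.choose (2 * n + 2) (2 * i + 2) * (2 * i + 2)) := key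
      _ = 2 * (2 * ((i + 1) * ((j + 1) * Nat.choose (2 * n + 2) (2 * i + 2)))) := by ring
  exact Nat.eq_of_mul_eq_mul_left two_pos final

lemma catalan_identity (i n : ℕ) (h : n = 2 * i + 1) :
    (n + 1) * Nat.choose (2 * n) n = 4 * (i + 1) ^ 2 * catalan n := by
  have h5 : Nat.choose (2 * n) n = (n + 1) * catalan n := by
    have h6 := succ_mul_catalan_eq_centralBinom n
    rw [Nat.centralBinom] at h6
    exact h6.symm
  rw [h5, show n + 1 = 2 * (i + 1) by omega]
  ring

theorem T_dvd (n : ℕ) : (2 : ℤ) ^ (2 * n) ∣ ((n : ℤ) + 1) * T (2 * n + 1) := by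
  induction n using Nat.strong_induction_on with
  | _ n IH =>
  rcases Nat.eq_zero_or_pos n with rfl | hn
  · simp [T_one]
  -- the summand
  set c : ℕ → ℤ := fun i =>
    ((n : ℤ) + 1) * (((2 * n).choose (2 * i + 1) : ℤ) *
      (T (2 * (n - 1 - i) + 1) * T (2 * i + 1))) with hc_def
  -- the recurrence, restricted to odd indices
  have hx : ((n : ℤ) + 1) * T (2 * n + 1) = ∑ i ∈ range n, c i := by
    have hrec := T_rec (2 * n)
    rw [if_neg (by omega)] at hrec
    have hsum := sum_odd_vanish n
      (fun k => ((2 * n).choose k : ℤ) * (T (2 * n - k) * T k))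
      (fun i => by simp [T_even i])
    rw [hsum] at hrec
    rw [hrec, zero_add, mul_sum]
    refine sum_congr rfl fun i hi => ?_
    rw [mem_range] at hi
    show ((n : ℤ) + 1) * (((2 * n).choose (2 * i + 1) : ℤ) *
        (T (2 * n - (2 * i + 1)) * T (2 * i + 1))) = c i
    rw [hc_def]
    simp only
    rw [show 2 * n - (2 * i + 1) = 2 * (n - 1 - i) + 1 by omega]
  -- termwise divisibility by 2 ^ (2n - 1)
  have hterm : ∀ i < n, (2 : ℤ) ^ (2 * n - 1) ∣ c i := by
    intro i hi
    set j := n - 1 - i with hj_def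
    have hj : j < n := by omega
    obtain ⟨a, ha⟩ := IH i hi
    obtain ⟨b, hb⟩ := IH j hj
    have hid : ((2 * n : ℕ) + 1 : ℤ) * (((n : ℤ) + 1) * ((2 * n).choose (2 * i + 1) : ℤ))
        = 2 * (((i : ℤ) + 1) * (((j : ℤ) + 1) * ((2 * n + 2).choose (2 * i + 2) : ℤ))) := by
      exact_mod_cast congrArg (Nat.cast : ℕ → ℤ) (choose_identity i j n (by omega))
    have hpow : (2 : ℤ) ^ (2 * n - 1) = 2 ^ (2 * i) * 2 ^ (2 * j) * 2 := by
      rw [show 2 * n - 1 = (2 * i + 2 * j) + 1 by omega, pow_succ, pow_add]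
    have hstep : ((i : ℤ) + 1) * (((j : ℤ) + 1) * (((2 * n : ℕ) + 1 : ℤ) * c i))
        = ((i : ℤ) + 1) * (((j : ℤ) + 1) * ((2 : ℤ) ^ (2 * n - 1) *
            (((2 * n + 2).choose (2 * i + 2) : ℤ) * (a * b)))) := by
      calc ((i : ℤ) + 1) * (((j : ℤ) + 1) * (((2 * n : ℕ) + 1 : ℤ) * c i))
          = (((2 * n : ℕ) + 1 : ℤ) * (((n : ℤ) + 1) * ((2 * n).choose (2 * i + 1) : ℤ))) *
              ((((i : ℤ) + 1) * T (2 * i + 1)) * ((((j : ℤ) + 1)) * T (2 * j + 1))) := by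
            rw [hc_def]; ring
        _ = (2 * (((i : ℤ) + 1) * (((j : ℤ) + 1) * ((2 * n + 2).choose (2 * i + 2) : ℤ)))) *
              ((2 ^ (2 * i) * a) * (2 ^ (2 * j) * b)) := by rw [hid, ha, hb]
        _ = ((i : ℤ) + 1) * (((j : ℤ) + 1) * ((2 ^ (2 * i) * 2 ^ (2 * j) * 2) *
              (((2 * n + 2).choose (2 * i + 2) : ℤ) * (a * b)))) := by ring
        _ = _ := by rw [hpow]
    have hi1 : ((i : ℤ) + 1) ≠ 0 := by positivity
    have hj1 : ((j : ℤ) + 1) ≠ 0 := by positivity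
    have hcancel : ((2 * n : ℕ) + 1 : ℤ) * c i
        = (2 : ℤ) ^ (2 * n - 1) * (((2 * n + 2).choose (2 * i + 2) : ℤ) * (a * b)) :=
      mul_left_cancel₀ hj1 (mul_left_cancel₀ hi1 hstep)
    have hcop : IsCoprime ((2 : ℤ) ^ (2 * n - 1)) ((2 * n : ℕ) + 1 : ℤ) := by
      apply IsCoprime.pow_left
      exact ⟨-(n : ℤ), 1, by push_cast; ring⟩
    exact hcop.dvd_of_dvd_mul_left ⟨_, hcancel⟩
  -- the middle term is divisible by 2 ^ (2n)
  have hmid : ∀ i < n, n = 2 * i + 1 → (2 : ℤ) ^ (2 * n) ∣ c i := by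
    intro i hi hni
    obtain ⟨a, ha⟩ := IH i hi
    have hcat : (((n : ℤ) + 1) * ((2 * n).choose n : ℤ))
        = 4 * ((i : ℤ) + 1) ^ 2 * (catalan n : ℤ) := by
      exact_mod_cast congrArg (Nat.cast : ℕ → ℤ) (catalan_identity i n hni)
    have hi1 : (((i : ℤ) + 1) ^ 2) ≠ 0 := by positivity
    have hpow2 : (2 : ℤ) ^ (2 * n) = 4 * (2 ^ (2 * i) * 2 ^ (2 * i)) := by
      rw [show 2 * n = 2 + (2 * i + 2 * i) by omega, pow_add, pow_add]
      norm_num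
    have ha' : ((i : ℤ) + 1) * T n = 2 ^ (2 * i) * a := by rw [hni]; exact ha
    have hstep : ((i : ℤ) + 1) ^ 2 * c i
        = ((i : ℤ) + 1) ^ 2 * ((2 : ℤ) ^ (2 * n) * ((catalan n : ℤ) * (a * a))) := by
      calc ((i : ℤ) + 1) ^ 2 * c i
          = (((n : ℤ) + 1) * ((2 * n).choose n : ℤ)) *
              ((((i : ℤ) + 1) * T n) * (((i : ℤ) + 1) * T n)) := by
            rw [hc_def]
            simp only
            rw [show n - 1 - i = i by omega, show 2 * i + 1 = n by omega]
            ring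
        _ = (((n : ℤ) + 1) * ((2 * n).choose n : ℤ)) *
              ((2 ^ (2 * i) * a) * (2 ^ (2 * i) * a)) := by rw [ha']
        _ = ((i : ℤ) + 1) ^ 2 * ((4 * (2 ^ (2 * i) * 2 ^ (2 * i))) *
              ((catalan n : ℤ) * (a * a))) := by rw [hcat]; ring
        _ = _ := by rw [hpow2]
    exact ⟨_, mul_left_cancel₀ hi1 hstep⟩
  -- symmetry of the summands
  have hsymm : ∀ i < n, c i = c (n - 1 - i) := by
    intro i hi
    have hch : (2 * n).choose (2 * i + 1) = (2 * n).choose (2 * (n - 1 - i) + 1) := by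
      rw [show 2 * (n - 1 - i) + 1 = 2 * n - (2 * i + 1) by omega]
      exact (Nat.choose_symm (by omega)).symm
    rw [hc_def]
    simp only
    rw [hch, show n - 1 - (n - 1 - i) = i by omega]
    ring
  -- the quotients
  set d : ℕ → ℤ := fun i => c i / 2 ^ (2 * n - 1) with hd_def
  have hcd : ∀ i < n, c i = 2 ^ (2 * n - 1) * d i := fun i hi =>
    (Int.mul_ediv_cancel' (hterm i hi)).symm
  have hdsymm : ∀ i < n, d i = d (n - 1 - i) := fun i hi => by
    rw [hd_def]; simp only; rw [hsymm i hi]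
  have hdmid : ∀ i < n, n - 1 - i = i → (2 : ℤ) ∣ d i := by
    intro i hi hfix
    obtain ⟨e, he⟩ := hmid i hi (by omega)
    refine ⟨e, ?_⟩
    have hpe : (2 : ℤ) ^ (2 * n) = 2 ^ (2 * n - 1) * 2 := by
      conv_lhs => rw [show 2 * n = (2 * n - 1) + 1 by omega]
      rw [pow_succ]
    have h2 : c i = 2 ^ (2 * n - 1) * (2 * e) := by rw [he, hpe]; ring
    have hne : ((2 : ℤ) ^ (2 * n - 1)) ≠ 0 := by positivity
    exact mul_left_cancel₀ hne (by rw [← hcd i hi, h2])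
  -- the sum of the quotients is even, via the involution i ↦ n - 1 - i
  have hzmod : (∑ i ∈ range n, ((d i : ZMod 2))) = 0 := by
    refine Finset.sum_involution (fun i _ => n - 1 - i) ?_ ?_ ?_ ?_
    · intro a ha
      rw [mem_range] at ha
      rw [← hdsymm a ha]
      exact CharTwo.add_self_eq_zero _
    · intro a ha hfa
      rw [mem_range] at ha
      intro hfix
      apply hfa
      rw [ZMod.intCast_zmod_eq_zero_iff_dvd]
      exact_mod_cast hdmid a ha hfix
    · intro a ha
      simp only [mem_range] at ha ⊢
      omega
    · intro a ha
      simp only [mem_range] at ha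
      omega
  have heven : (2 : ℤ) ∣ ∑ i ∈ range n, d i := by
    have := (ZMod.intCast_zmod_eq_zero_iff_dvd (∑ i ∈ range n, d i) 2).mp (by push_cast; exact hzmod)
    exact_mod_cast this
  obtain ⟨e, he⟩ := heven
  refine ⟨e, ?_⟩
  have hpe : (2 : ℤ) ^ (2 * n) = 2 ^ (2 * n - 1) * 2 := by
    conv_lhs => rw [show 2 * n = (2 * n - 1) + 1 by omega]
    rw [pow_succ]
  calc ((n : ℤ) + 1) * T (2 * n + 1) = ∑ i ∈ range n, c i := hx
    _ = ∑ i ∈ range n, 2 ^ (2 * n - 1) * d i :=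
        sum_congr rfl fun i hi => hcd i (mem_range.mp hi)
    _ = 2 ^ (2 * n - 1) * ∑ i ∈ range n, d i := by rw [mul_sum]
    _ = 2 ^ (2 * n - 1) * (2 * e) := by rw [he]
    _ = 2 ^ (2 * n) * e := by rw [hpe]; ring

lemma one_div_cos_sq {x : ℝ} (hx : Real.cos x ≠ 0) :
    1 / Real.cos x ^ 2 = 1 + Real.tan x ^ 2 := by
  rw [Real.tan_eq_sin_div_cos, div_pow]
  field_simp
  exact (Real.cos_sq_add_sin_sq x).symm

lemma iteratedDeriv_tan (n : ℕ) :
    ∀ x : ℝ, Real.cos x ≠ 0 →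
      iteratedDeriv n Real.tan x = Polynomial.aeval (Real.tan x) (tp n) := by
  induction n with
  | zero =>
    intro x hx
    simp [iteratedDeriv_zero, tp]
  | succ n IH =>
    intro x hx
    rw [iteratedDeriv_succ]
    have hS : IsOpen {y : ℝ | Real.cos y ≠ 0} :=
      isOpen_ne.preimage Real.continuous_cos
    have hEq : iteratedDeriv n Real.tan =ᶠ[nhds x]
        fun y => Polynomial.aeval (Real.tan y) (tp n) :=
      Filter.eventuallyEq_of_mem (hS.mem_nhds hx) fun y hy => IH y hy
    rw [hEq.deriv_eq]
    set q : ℝ[X] := (tp n).map (algebraMap ℤ ℝ) with hq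
    have hg : (fun y => Polynomial.aeval (Real.tan y) (tp n))
        = fun y => q.eval (Real.tan y) := by
      funext y
      rw [aeval_def, eval₂_eq_eval_map]
    have hder : HasDerivAt (fun y => q.eval (Real.tan y))
        (q.derivative.eval (Real.tan x) * (1 / Real.cos x ^ 2)) x :=
      (q.hasDerivAt (Real.tan x)).comp x (Real.hasDerivAt_tan hx)
    rw [hg, hder.deriv, one_div_cos_sq hx]
    show _ = Polynomial.aeval (Real.tan x) (Dop (tp n))
    rw [Dop, aeval_def, eval₂_eq_eval_map, Polynomial.map_mul, eval_mul,
      Polynomial.map_add, Polynomial.map_one, Polynomial.map_pow, Polynomial.map_X,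
      eval_add, eval_one, eval_pow, eval_X, ← derivative_map]
    ring

lemma tangent_eq_T (n : ℕ) : iteratedDeriv n Real.tan 0 = ((T n : ℤ) : ℝ) := by
  rw [iteratedDeriv_tan n 0 (by rw [Real.cos_zero]; norm_num), Real.tan_zero,
    aeval_def, eval₂_eq_eval_map, Polynomial.eval_zero_map]
  rfl

end TangentAux

/-- The tangent numbers: `tangent n` is the `n`-th derivative of `tan` at `0`,
so that `tan x = ∑ n, tangent n * x ^ n / n !`. -/
noncomputable def tangent (n : ℕ) : ℝ := iteratedDeriv n Real.tan 0

/-- For every integer `n ≥ 0`, the integer `(n+1) * T (2n+1)` is divisible by `2 ^ (2n)`. -/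
theorem tangent_div_pow_two (n : ℕ) :
    ∃ m : ℤ, ((n : ℝ) + 1) * tangent (2 * n + 1) = (2 : ℝ) ^ (2 * n) * (m : ℝ) := by
  obtain ⟨m, hm⟩ := TangentAux.T_dvd n
  refine ⟨m, ?_⟩
  have h0 : tangent (2 * n + 1) = ((TangentAux.T (2 * n + 1) : ℤ) : ℝ) :=
    TangentAux.tangent_eq_T (2 * n + 1)
  rw [h0]
  have h1 := congrArg (fun z : ℤ => (z : ℝ)) hm
  push_cast at h1
  linarith
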